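/- arXiv:1301.2730 — 5 statements merged into one kernel-verified Lean document; each statement's English description precedes it below -/
import Mathlib

section
/- Every k-subalgebra A of the polynomial ring k[x] in one variable over a field k is finitely generated as a k-algebra. -/
set_option maxHeartbeats 1000000 in
set_option synthInstance.maxHeartbeats 400000 in
/-- Every `k`-subalgebra of the polynomial ring `k[x]` in one variable over a field `k`
is finitely generated as a `k`-algebra. -/
theorem subalgebra_of_polynomial_fg (k : Type*) [Field k]
    (A : Subalgebra k (Polynomial k)) : A.FG := by
  classical
  by_cases hA : A ≤ ⊥
  · have : A = ⊥ := le_antisymm hA bot_le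
    rw [this]; exact Subalgebra.fg_bot
  · skip
    obtain ⟨f, hfA, hfb⟩ := SetLike.not_le_iff_exists.mp hA
    have hdeg : 0 < f.natDegree := by
      rcases Nat.eq_zero_or_pos f.natDegree with h0 | h; swap; · exact h
      obtain ⟨c, hc⟩ := Polynomial.natDegree_eq_zero.mp h0
      exact absurd (Algebra.mem_bot.mpr ⟨c, by rw [← hc]; rfl⟩) hfb
    have hf0 : f ≠ 0 := fun h => by simp [h] at hdeg
    set p : Polynomial k := f * Polynomial.C f.leadingCoeff⁻¹ with hp
    have hpm : p.Monic := Polynomial.monic_mul_leadingCoeff_inv hf0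
    have hpdeg : 0 < p.natDegree := by
      rwa [hp, Polynomial.natDegree_mul_C (inv_ne_zero (Polynomial.leadingCoeff_ne_zero.mpr hf0))]
    set B : Subalgebra k (Polynomial k) := Algebra.adjoin k {f} with hB
    have hBA : B ≤ A := Algebra.adjoin_le (Set.singleton_subset_iff.mpr hfA)
    have hpB : p ∈ B := mul_mem (Algebra.subset_adjoin rfl)
      (Subalgebra.algebraMap_mem B f.leadingCoeff⁻¹)
    -- X is integral over B
    have hXint : IsIntegral B (Polynomial.X : Polynomial k) := by
      refine ⟨p.map (algebraMap k B) + Polynomial.C (-(⟨p, hpB⟩ : B)), ?_, ?_⟩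
      · have h1 : (p.map (algebraMap k B)).Monic := hpm.map _
        refine h1.add_of_left ?_
        calc (Polynomial.C (-(⟨p, hpB⟩ : B))).degree ≤ 0 := Polynomial.degree_C_le
        _ < (p.map (algebraMap k B)).degree := by
            rw [hpm.degree_map (algebraMap k B)]
            exact Polynomial.natDegree_pos_iff_degree_pos.mp hpdeg
      · show (Polynomial.aeval (Polynomial.X : Polynomial k))
            (p.map (algebraMap k B) + Polynomial.C (-(⟨p, hpB⟩ : B))) = 0
        rw [map_add, Polynomial.aeval_map_algebraMap, Polynomial.aeval_C,
          Polynomial.aeval_X_left_apply]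
        show p + (algebraMap B (Polynomial k)) (-(⟨p, hpB⟩ : B)) = 0
        rw [map_neg]
        show p + -(⟨p, hpB⟩ : B).val = 0
        simp
    -- Polynomial k is a finite B-module
    have hX : (Polynomial.X : Polynomial k) ∈ Algebra.adjoin B {(Polynomial.X : Polynomial k)} :=
      Algebra.subset_adjoin rfl
    have htop : Algebra.adjoin B {(Polynomial.X : Polynomial k)} = ⊤ := by
      rw [eq_top_iff]
      suffices h : ∀ z : Polynomial k, z ∈ Algebra.adjoin B {(Polynomial.X : Polynomial k)} from
        fun z _ => h z
      intro z
      induction z using Polynomial.induction_on' with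
      | add q r hq hr => exact add_mem hq hr
      | monomial n a =>
        rw [← Polynomial.C_mul_X_pow_eq_monomial]
        have hCa : Polynomial.C a ∈ B := Subalgebra.algebraMap_mem B a
        exact mul_mem
          (Subalgebra.algebraMap_mem (Algebra.adjoin B {(Polynomial.X : Polynomial k)})
            (⟨Polynomial.C a, hCa⟩ : B)) (pow_mem hX n)
    have hfin : Module.Finite B (Polynomial k) := by
      constructor
      have := hXint.fg_adjoin_singleton
      rwa [htop, Algebra.top_toSubmodule] at this
    -- B is a Noetherian ring
    have hBfg : B.FG := ⟨{f}, by simp [hB]⟩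
    have hBft : Algebra.FiniteType k B := (Subalgebra.fg_iff_finiteType B).mp hBfg
    have hBnoeth : IsNoetherianRing B := Algebra.FiniteType.isNoetherianRing k B
    have hnoeth : IsNoetherian B (Polynomial k) :=
      isNoetherian_of_isNoetherianRing_of_finite B (Polynomial k)
    -- A as a B-subalgebra
    let A' : Subalgebra B (Polynomial k) :=
      { A.toSubsemiring with algebraMap_mem' := fun r => hBA r.2 }
    have hA'fg : A'.FG :=
      Subalgebra.fg_of_fg_toSubmodule (IsNoetherian.noetherian (Subalgebra.toSubmodule A'))
    have hA'ft : Algebra.FiniteType B A' := (Subalgebra.fg_iff_finiteType A').mp hA'fg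
    have hft : Algebra.FiniteType k A' := Algebra.FiniteType.trans hBft hA'ft
    have heq : A'.restrictScalars k = A := rfl
    rw [Subalgebra.fg_iff_finiteType, ← heq]
    exact hft
end

section
/- If A is a k-subalgebra of k[x] containing a non-constant polynomial, then k[x] is integral over A. -/
theorem aux_X_integral (k : Type*) [Field k]
    (A : Subalgebra k (Polynomial k))
    (p : Polynomial k) (hp : p ∈ A) (hdeg : 0 < p.natDegree) :
    IsIntegral A (Polynomial.X : Polynomial k) := by
  classical
  set c := p.leadingCoeff with hc
  have hp0 : p ≠ 0 := fun h => by simp [h] at hdeg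
  have hc0 : c ≠ 0 := Polynomial.leadingCoeff_ne_zero.mpr hp0
  set p' : Polynomial k := c⁻¹ • p with hp'
  have hp'A : p' ∈ A := A.smul_mem hp _
  have hmonic : p'.Monic := by
    rw [hp', Polynomial.Monic, Polynomial.smul_eq_C_mul,
      Polynomial.leadingCoeff_mul' ?_]
    · simp [← hc, inv_mul_cancel₀ hc0]
    · simp [inv_mul_cancel₀ hc0, hc0, hp0]
  have hdeg' : 0 < p'.natDegree := by
    rwa [hp', Polynomial.smul_eq_C_mul, Polynomial.natDegree_C_mul (inv_ne_zero hc0)]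
  refine ⟨p'.map (algebraMap k A) - Polynomial.C ⟨p', hp'A⟩, ?_, ?_⟩
  · apply Polynomial.Monic.sub_of_left
    · exact hmonic.map _
    · calc (Polynomial.C (⟨p', hp'A⟩ : A)).degree ≤ 0 := Polynomial.degree_C_le
        _ < (p'.map (algebraMap k A)).degree := by
            rw [Polynomial.degree_map_eq_of_leadingCoeff_ne_zero]
            · rw [Polynomial.degree_eq_natDegree (hmonic.ne_zero)]
              exact_mod_cast hdeg'
            · simp only [Polynomial.Monic.leadingCoeff hmonic]
              exact fun h => one_ne_zero (Subtype.ext_iff.mp h)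
  · rw [Polynomial.eval₂_sub, Polynomial.eval₂_C]
    have : Polynomial.eval₂ (algebraMap A (Polynomial k)) Polynomial.X
        (p'.map (algebraMap k A)) = p' := by
      rw [Polynomial.eval₂_map]
      have : (algebraMap A (Polynomial k)).comp (algebraMap k A)
          = algebraMap k (Polynomial k) := by
        ext a; rfl
      rw [this]
      simp [Polynomial.aeval_def]
    rw [this]
    simp [Subalgebra.algebraMap_eq]

/-- If a `k`-subalgebra `A` of `k[x]` contains a non-constant polynomial, then `k[x]` is
integral over `A`. -/
theorem polynomial_integral_over_subalgebra (k : Type*) [Field k]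
    (A : Subalgebra k (Polynomial k))
    (p : Polynomial k) (hp : p ∈ A) (hdeg : 0 < p.natDegree) :
    ∀ q : Polynomial k, IsIntegral A q := by
  have hX := aux_X_integral k A p hp hdeg
  intro q
  induction q using Polynomial.induction_on' with
  | add f g hf hg => exact hf.add hg
  | monomial n a =>
      rw [← Polynomial.C_mul_X_pow_eq_monomial]
      have hC : IsIntegral A (Polynomial.C a) := by
        have : Polynomial.C a ∈ A := A.algebraMap_mem a
        exact isIntegral_algebraMap (R := A) (x := (⟨_, this⟩ : A))
      exact hC.mul (hX.pow n)
end

section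
/- Let ω be a weighted degree on S = ℂ[x,y,z₁,z₂] and δ a degree-like function on ℂ[x,y] with δ(fg) = δ(f)+δ(g) for all f,g ≠ 0, and let π : S → ℂ[x,y] be a surjective ℂ-algebra homomorphism with ω(F) ≥ δ(π(F)) for all F. Then the ideal J of S generated by all ω-homogeneous polynomials F with ω(F) > δ(π(F)) is a prime ideal. -/
open MvPolynomial

open MvPolynomial

section Aux

variable {δ : MvPolynomial (Fin 2) ℂ → WithBot ℤ}

lemma aux_delta_zero (hbot : ∀ f, δ f = ⊥ ↔ f = 0) : δ 0 = ⊥ := (hbot 0).mpr rfl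

lemma aux_delta_one (hmul : ∀ f g, δ (f * g) = δ f + δ g)
    (hbot : ∀ f, δ f = ⊥ ↔ f = 0) : δ 1 = 0 := by
  have h := hmul 1 1
  rw [one_mul] at h
  have h1 : δ 1 ≠ ⊥ := by simp only [ne_eq, hbot]; exact one_ne_zero
  obtain ⟨n, hn⟩ := WithBot.ne_bot_iff_exists.mp h1
  rw [← hn, ← WithBot.coe_add, WithBot.coe_eq_coe] at h
  have hn0 : n = 0 := by omega
  rw [← hn, hn0]; rfl

lemma aux_delta_negone (hmul : ∀ f g, δ (f * g) = δ f + δ g)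
    (hbot : ∀ f, δ f = ⊥ ↔ f = 0) : δ (-1) = 0 := by
  have h := hmul (-1) (-1)
  rw [neg_one_mul, neg_neg, aux_delta_one hmul hbot] at h
  have h1 : δ (-1) ≠ ⊥ := by simp only [ne_eq, hbot]; simp
  obtain ⟨n, hn⟩ := WithBot.ne_bot_iff_exists.mp h1
  rw [← hn, ← WithBot.coe_add] at h
  have h0 : (0 : WithBot ℤ) = ((0:ℤ) : WithBot ℤ) := rfl
  rw [h0, WithBot.coe_eq_coe] at h
  have hn0 : n = 0 := by omega
  rw [← hn, hn0]; rfl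

lemma aux_delta_neg (hmul : ∀ f g, δ (f * g) = δ f + δ g)
    (hbot : ∀ f, δ f = ⊥ ↔ f = 0) (f : MvPolynomial (Fin 2) ℂ) : δ (-f) = δ f := by
  have := hmul (-1) f
  rw [neg_one_mul, aux_delta_negone hmul hbot, zero_add] at this
  exact this

lemma aux_delta_sum (hadd : ∀ f g, δ (f + g) ≤ max (δ f) (δ g))
    (hbot : ∀ f, δ f = ⊥ ↔ f = 0)
    {ι : Type*} (s : Finset ι) (f : ι → MvPolynomial (Fin 2) ℂ) (c : ℤ)
    (h : ∀ i ∈ s, δ (f i) < (c : WithBot ℤ)) :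
    δ (∑ i ∈ s, f i) < (c : WithBot ℤ) := by
  classical
  induction s using Finset.cons_induction with
  | empty =>
    rw [Finset.sum_empty, aux_delta_zero hbot]
    exact WithBot.bot_lt_coe c
  | cons a s ha ih =>
    rw [Finset.sum_cons]
    refine lt_of_le_of_lt (hadd _ _) (max_lt (h a (Finset.mem_cons_self a s)) ?_)
    exact ih fun i hi => h i (Finset.mem_cons_of_mem hi)

lemma aux_delta_stable (hadd : ∀ f g, δ (f + g) ≤ max (δ f) (δ g))
    (hmul : ∀ f g, δ (f * g) = δ f + δ g)
    (hbot : ∀ f, δ f = ⊥ ↔ f = 0)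
    {x y : MvPolynomial (Fin 2) ℂ} {c : WithBot ℤ}
    (hx : δ x = c) (hy : δ y < c) : ¬ δ (x + y) < c := by
  intro h
  have h2 : δ x ≤ max (δ (x + y)) (δ y) := by
    have := hadd (x + y) (-y)
    rw [add_neg_cancel_right, aux_delta_neg hmul hbot] at this
    exact this
  rw [hx] at h2
  exact absurd (lt_of_le_of_lt h2 (max_lt h hy)) (lt_irrefl c)

lemma aux_wb_add_lt {a b : WithBot ℤ} {m n : ℤ} (ha : a ≤ (m : WithBot ℤ))
    (hb : b < (n : WithBot ℤ)) : a + b < ((m + n : ℤ) : WithBot ℤ) := by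
  cases a with
  | bot => rw [WithBot.bot_add]; exact WithBot.bot_lt_coe _
  | coe a' =>
    cases b with
    | bot => rw [WithBot.add_bot]; exact WithBot.bot_lt_coe _
    | coe b' =>
      rw [← WithBot.coe_add, WithBot.coe_lt_coe]
      have := WithBot.coe_le_coe.mp ha
      have := WithBot.coe_lt_coe.mp hb
      omega

lemma aux_wb_add_lt' {a b : WithBot ℤ} {m n : ℤ} (ha : a < (m : WithBot ℤ))
    (hb : b ≤ (n : WithBot ℤ)) : a + b < ((m + n : ℤ) : WithBot ℤ) := by
  rw [add_comm a b, show m + n = n + m from by ring]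
  exact aux_wb_add_lt hb ha

end Aux

section Comp

variable {w : Fin 4 → ℤ}

lemma aux_comp_mul_homog (r G : MvPolynomial (Fin 4) ℂ) {e : ℤ} (d : ℤ)
    (hG : IsWeightedHomogeneous w G e) :
    weightedHomogeneousComponent w d (r * G) =
      weightedHomogeneousComponent w (d - e) r * G := by
  classical
  have hT := weightedHomogeneousComponent_finsupp (w := w) r
  set T := hT.toFinset with hTdef
  have hr : ∑ i ∈ T, weightedHomogeneousComponent w i r = r := by
    rw [← finsum_eq_sum _ hT, finsum_weightedHomogeneousComponent]
  conv_lhs => rw [← hr, Finset.sum_mul, map_sum]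
  have hstep : ∀ i ∈ T,
      weightedHomogeneousComponent w d (weightedHomogeneousComponent w i r * G) =
        if i = d - e then weightedHomogeneousComponent w i r * G else 0 := by
    intro i _
    have hmem : weightedHomogeneousComponent w i r * G ∈
        weightedHomogeneousSubmodule ℂ w (i + e) := by
      rw [mem_weightedHomogeneousSubmodule]
      exact (weightedHomogeneousComponent_isWeightedHomogeneous i r).mul hG
    rw [weightedHomogeneousComponent_of_mem hmem]
    exact if_congr (by omega) rfl rfl
  rw [Finset.sum_congr rfl hstep, Finset.sum_ite_eq' T (d - e)
    (fun i => weightedHomogeneousComponent w i r * G)]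
  by_cases hde : d - e ∈ T
  · rw [if_pos hde]
  · rw [if_neg hde]
    have : weightedHomogeneousComponent w (d - e) r = 0 := by
      by_contra hne
      exact hde (hT.mem_toFinset.mpr hne)
    rw [this, zero_mul]

end Comp

/-- Let `ω` be a weighted degree on `S = ℂ[x,y,z₁,z₂]` (given by integer weights `w` on the
variables), `δ` a semidegree on `ℂ[x,y]`, and `π : S → ℂ[x,y]` a surjective `ℂ`-algebra
homomorphism with `ω(F) ≥ δ(π(F))` for all `F`.  Then the ideal `J` of `S` generated by all
`ω`-homogeneous polynomials `F` with `ω(F) > δ(π(F))` is a prime ideal. -/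
theorem leading_ideal_is_prime (w : Fin 4 → ℤ)
    (δ : MvPolynomial (Fin 2) ℂ → WithBot ℤ)
    (hadd : ∀ f g, δ (f + g) ≤ max (δ f) (δ g))
    (hmul : ∀ f g, δ (f * g) = δ f + δ g)
    (hbot : ∀ f, δ f = ⊥ ↔ f = 0)
    (π : MvPolynomial (Fin 4) ℂ →ₐ[ℂ] MvPolynomial (Fin 2) ℂ)
    (hπ : Function.Surjective π)
    (hle : ∀ F : MvPolynomial (Fin 4) ℂ, δ (π F) ≤ weightedTotalDegree' w F) :
    (Ideal.span {F : MvPolynomial (Fin 4) ℂ |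
        ∃ d : ℤ, IsWeightedHomogeneous w F d ∧ δ (π F) < (d : WithBot ℤ)}).IsPrime := by
  classical
  set J : Ideal (MvPolynomial (Fin 4) ℂ) := Ideal.span {F : MvPolynomial (Fin 4) ℂ |
        ∃ d : ℤ, IsWeightedHomogeneous w F d ∧ δ (π F) < (d : WithBot ℤ)} with hJ
  -- δ ∘ π of any weighted homogeneous component is at most its degree
  have hcomp_le : ∀ (F : MvPolynomial (Fin 4) ℂ) (d : ℤ),
      δ (π (weightedHomogeneousComponent w d F)) ≤ (d : WithBot ℤ) := by
    intro F d
    rcases eq_or_ne (weightedHomogeneousComponent w d F) 0 with h | h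
    · rw [h, map_zero, aux_delta_zero hbot]; exact bot_le
    · refine (hle _).trans ?_
      rw [IsWeightedHomogeneous.weighted_total_degree
        (weightedHomogeneousComponent_isWeightedHomogeneous d F) h]
  -- members of J have all components strict
  have span_good : ∀ F ∈ J, ∀ d : ℤ,
      δ (π (weightedHomogeneousComponent w d F)) < (d : WithBot ℤ) := by
    intro F hF
    refine Submodule.span_induction
      (p := fun x _ => ∀ d : ℤ,
        δ (π (weightedHomogeneousComponent w d x)) < (d : WithBot ℤ)) ?_ ?_ ?_ ?_ hF
    · rintro x ⟨e, hx, hlt⟩ d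
      by_cases hde : d = e
      · subst hde
        rw [hx.weightedHomogeneousComponent_same]
        exact hlt
      · rw [hx.weightedHomogeneousComponent_ne d hde, map_zero, aux_delta_zero hbot]
        exact WithBot.bot_lt_coe d
    · intro d
      rw [map_zero, map_zero, aux_delta_zero hbot]
      exact WithBot.bot_lt_coe d
    · intro x y _ _ hx hy d
      rw [map_add, map_add]
      exact lt_of_le_of_lt (hadd _ _) (max_lt (hx d) (hy d))
    · intro r x _ hx d
      rw [smul_eq_mul]
      have hT := weightedHomogeneousComponent_finsupp (w := w) x
      have hr : ∑ j ∈ hT.toFinset, weightedHomogeneousComponent w j x = x := by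
        rw [← finsum_eq_sum _ hT, finsum_weightedHomogeneousComponent]
      have hdec : weightedHomogeneousComponent w d (r * x) =
          ∑ j ∈ hT.toFinset, weightedHomogeneousComponent w (d - j) r *
            weightedHomogeneousComponent w j x := by
        conv_lhs => rw [← hr, Finset.mul_sum, map_sum]
        exact Finset.sum_congr rfl fun j _ =>
          aux_comp_mul_homog r _ d (weightedHomogeneousComponent_isWeightedHomogeneous j x)
      rw [hdec, map_sum]
      refine aux_delta_sum hadd hbot _ _ d ?_
      intro j _
      rw [map_mul, hmul]
      have h1 := hcomp_le r (d - j)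
      have h2 := hx j
      have h3 := aux_wb_add_lt h1 h2
      rwa [show d - j + j = d from by ring] at h3
  -- converse: all components strict implies membership in J
  have good_span : ∀ F : MvPolynomial (Fin 4) ℂ,
      (∀ d : ℤ, δ (π (weightedHomogeneousComponent w d F)) < (d : WithBot ℤ)) → F ∈ J := by
    intro F hF
    have hT := weightedHomogeneousComponent_finsupp (w := w) F
    have hr : ∑ j ∈ hT.toFinset, weightedHomogeneousComponent w j F = F := by
      rw [← finsum_eq_sum _ hT, finsum_weightedHomogeneousComponent]
    rw [← hr]
    exact Ideal.sum_mem _ fun j _ => Ideal.subset_span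
      ⟨j, weightedHomogeneousComponent_isWeightedHomogeneous j F, hF j⟩
  -- extraction of top "exact" component for non-members
  have hmaxgen : ∀ F : MvPolynomial (Fin 4) ℂ, F ∉ J → ∃ a : ℤ,
      δ (π (weightedHomogeneousComponent w a F)) = (a : WithBot ℤ) ∧
      ∀ j : ℤ, a < j → δ (π (weightedHomogeneousComponent w j F)) < (j : WithBot ℤ) := by
    intro F hF
    have hne : ∃ a : ℤ, ¬ δ (π (weightedHomogeneousComponent w a F)) < (a : WithBot ℤ) := by
      by_contra h
      push_neg at h
      exact hF (good_span F h)
    have hT := weightedHomogeneousComponent_finsupp (w := w) F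
    have hAsub : {a : ℤ | ¬ δ (π (weightedHomogeneousComponent w a F)) < (a : WithBot ℤ)} ⊆
        Function.support fun m => weightedHomogeneousComponent w m F := by
      intro a ha
      simp only [Function.mem_support]
      intro hzero
      exact ha (by rw [hzero, map_zero, aux_delta_zero hbot]; exact WithBot.bot_lt_coe a)
    have hAfin : {a : ℤ | ¬ δ (π (weightedHomogeneousComponent w a F)) <
        (a : WithBot ℤ)}.Finite := hT.subset hAsub
    have hAne : hAfin.toFinset.Nonempty := by
      obtain ⟨a, ha⟩ := hne
      exact ⟨a, hAfin.mem_toFinset.mpr ha⟩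
    have haA : ¬ δ (π (weightedHomogeneousComponent w (hAfin.toFinset.max' hAne) F)) <
        ((hAfin.toFinset.max' hAne : ℤ) : WithBot ℤ) :=
      hAfin.mem_toFinset.mp (hAfin.toFinset.max'_mem hAne)
    refine ⟨hAfin.toFinset.max' hAne, le_antisymm (hcomp_le F _) (not_lt.mp haA), ?_⟩
    intro j hj
    by_contra hjlt
    exact absurd (hAfin.toFinset.le_max' j (hAfin.mem_toFinset.mpr hjlt)) (not_le.mpr hj)
  constructor
  · intro htop
    have h1 : (1 : MvPolynomial (Fin 4) ℂ) ∈ J := (Ideal.eq_top_iff_one _).mp htop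
    have h2 := span_good 1 h1 0
    rw [(isWeightedHomogeneous_one ℂ w).weightedHomogeneousComponent_same, map_one,
      aux_delta_one hmul hbot] at h2
    simp at h2
  · intro F G hFG
    by_contra hcon
    push_neg at hcon
    obtain ⟨hF, hG⟩ := hcon
    obtain ⟨a, haeq, hamax⟩ := hmaxgen F hF
    obtain ⟨b, hbeq, hbmax⟩ := hmaxgen G hG
    have hTG := weightedHomogeneousComponent_finsupp (w := w) G
    have hGb : weightedHomogeneousComponent w b G ≠ 0 := by
      intro h
      rw [h, map_zero, aux_delta_zero hbot] at hbeq
      exact WithBot.bot_ne_coe hbeq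
    have hbT : b ∈ hTG.toFinset := hTG.mem_toFinset.mpr hGb
    have hrG : ∑ j ∈ hTG.toFinset, weightedHomogeneousComponent w j G = G := by
      rw [← finsum_eq_sum _ hTG, finsum_weightedHomogeneousComponent]
    have hdecomp : weightedHomogeneousComponent w (a + b) (F * G) =
        ∑ j ∈ hTG.toFinset, weightedHomogeneousComponent w (a + b - j) F *
          weightedHomogeneousComponent w j G := by
      conv_lhs => rw [← hrG, Finset.mul_sum, map_sum]
      exact Finset.sum_congr rfl fun j _ =>
        aux_comp_mul_homog F _ (a + b) (weightedHomogeneousComponent_isWeightedHomogeneous j G)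
    have hsplit : weightedHomogeneousComponent w (a + b) (F * G) =
        weightedHomogeneousComponent w a F * weightedHomogeneousComponent w b G +
        ∑ j ∈ hTG.toFinset.erase b, weightedHomogeneousComponent w (a + b - j) F *
          weightedHomogeneousComponent w j G := by
      rw [hdecomp, ← Finset.add_sum_erase _ _ hbT, add_sub_cancel_right]
    have hlast := span_good (F * G) hFG (a + b)
    rw [hsplit, map_add] at hlast
    have hX : δ (π (weightedHomogeneousComponent w a F * weightedHomogeneousComponent w b G)) =
        ((a + b : ℤ) : WithBot ℤ) := by
      rw [map_mul, hmul, haeq, hbeq, ← WithBot.coe_add]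
    have hY : δ (π (∑ j ∈ hTG.toFinset.erase b, weightedHomogeneousComponent w (a + b - j) F *
        weightedHomogeneousComponent w j G)) < ((a + b : ℤ) : WithBot ℤ) := by
      rw [map_sum]
      refine aux_delta_sum hadd hbot _ _ (a + b) ?_
      intro j hj
      have hjb : j ≠ b := Finset.ne_of_mem_erase hj
      rw [map_mul, hmul]
      rcases lt_or_gt_of_ne hjb with h | h
      · have h1 := hamax (a + b - j) (by omega)
        have h2 := hcomp_le G j
        have h3 := aux_wb_add_lt' h1 h2
        rwa [show a + b - j + j = a + b from by ring] at h3
      · have h1 := hcomp_le F (a + b - j)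
        have h2 := hbmax j h
        have h3 := aux_wb_add_lt h1 h2
        rwa [show a + b - j + j = a + b from by ring] at h3
    exact aux_delta_stable hadd hmul hbot hX hY hlast
end

section
/- Let δ₁ be the degree-like function on ℂ[x,y] given by the weighted degree on ℂ(x,y) = ℂ(x, y₁) with weights 1 for x and −3 for y₁ := y − x⁵ − x⁻². Then the graded algebra ℂ[x,y]^{δ₁} = ⊕_{d≥0} {f : δ₁(f) ≤ d} t^d is a finitely generated ℂ-algebra. -/
open Polynomial LaurentPolynomial

/-- The expansion of `f ∈ ℂ[x,y]` in `ℂ[x,x⁻¹][y₁]`, where `y₁ = y - x⁵ - x⁻²`: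
substitute `x ↦ x` and `y ↦ y₁ + x⁵ + x⁻²` (here `Polynomial.X` plays the role of `y₁`
and the coefficients are Laurent polynomials in `x`). -/
noncomputable def expandY1 (f : MvPolynomial (Fin 2) ℂ) :
    Polynomial (LaurentPolynomial ℂ) :=
  MvPolynomial.aeval
    ![Polynomial.C (T 1), Polynomial.X + Polynomial.C (T 5 + T (-2))] f

/-- The weighted degree `δ₁` on `ℂ[x,y]` with weights `1` for `x` and `-3` for
`y₁ = y - x⁵ - x⁻²`:  writing `f = Σ c_{αβ} x^α y₁^β`, `δ₁ f = max {α - 3β : c_{αβ} ≠ 0}`. -/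
noncomputable def delta1 (f : MvPolynomial (Fin 2) ℂ) : WithBot ℤ :=
  ((expandY1 f).support.biUnion fun β =>
    ((expandY1 f).coeff β).coeff.support.image fun α => α - 3 * (β : ℤ)).max

open scoped Pointwise
namespace Delta1FG
noncomputable section

abbrev Mv : Type := MvPolynomial (Fin 2) ℂ
abbrev L : Type := LaurentPolynomial ℂ

def xx : Mv := MvPolynomial.X 0
def yy : Mv := MvPolynomial.X 1
def u : Mv := yy - xx ^ 5
def v : Mv := xx ^ 2 * yy - xx ^ 7 - 1

def E : Mv →ₐ[ℂ] Polynomial L :=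
  MvPolynomial.aeval ![Polynomial.C (T 1), Polynomial.X + Polynomial.C (T 5 + T (-2))]

lemma expandY1_eq (f : Mv) : expandY1 f = E f := rfl

lemma E_x : E xx = Polynomial.C (T 1) := by simp [E, xx]

lemma E_y : E yy = Polynomial.X + Polynomial.C (T 5 + T (-2)) := by simp [E, yy]

lemma E_u : E u = Polynomial.X + Polynomial.C (T (-2)) := by
  simp only [u, map_sub, map_pow, E_x, E_y, ← Polynomial.C_pow, T_pow, map_add]
  ring_nf

lemma E_v : E v = Polynomial.C (T 2) * Polynomial.X := by
  have h1' : (Polynomial.C (T 7) : Polynomial L) = Polynomial.C (T 2) * Polynomial.C (T 5) := by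
    rw [← map_mul]; congr 1; rw [← T_add]; norm_num
  have h2' : (Polynomial.C (T 2) : Polynomial L) * Polynomial.C (T (-2)) = 1 := by
    rw [← map_mul, ← T_add]; norm_num
  simp only [v, map_sub, map_mul, map_pow, map_one, E_x, E_y, ← Polynomial.C_pow, T_pow]
  norm_num
  linear_combination h2' - h1' 

/-- The support bound predicate: all monomials `x^α y₁^β` of `P` satisfy `α - 3 β ≤ n`. -/
def SuppLE (P : Polynomial L) (n : ℤ) : Prop :=
  ∀ (β : ℕ) (α : ℤ), (P.coeff β).coeff α ≠ 0 → α - 3 * (β : ℤ) ≤ n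

lemma delta1_le_iff {f : Mv} {d : ℤ} : delta1 f ≤ (d : WithBot ℤ) ↔ SuppLE (expandY1 f) d := by
  rw [delta1, Finset.max_le_iff]
  constructor
  · intro h β α hne
    by_cases hβ : (expandY1 f).coeff β = 0
    · simp [hβ] at hne
    have : (α - 3 * (β:ℤ)) ∈ ((expandY1 f).support.biUnion fun β =>
        ((expandY1 f).coeff β).coeff.support.image fun α => α - 3 * (β : ℤ)) := by
      refine Finset.mem_biUnion.2 ⟨β, ?_, Finset.mem_image.2 ⟨α, ?_, rfl⟩⟩
      · exact Polynomial.mem_support_iff.2 hβ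
      · exact Finsupp.mem_support_iff.2 hne
    exact_mod_cast h _ this
  · intro h a ha
    obtain ⟨β, -, hmem⟩ := Finset.mem_biUnion.1 ha
    obtain ⟨α, hα, rfl⟩ := Finset.mem_image.1 hmem
    exact_mod_cast h β α (Finsupp.mem_support_iff.1 hα)


lemma SuppLE.mono {P : Polynomial L} {n m : ℤ} (h : SuppLE P n) (hnm : n ≤ m) : SuppLE P m :=
  fun β α hne => (h β α hne).trans hnm

lemma suppLE_zero (n : ℤ) : SuppLE (0 : Polynomial L) n := by
  intro β α hne
  simp at hne

lemma SuppLE.add {P Q : Polynomial L} {n : ℤ} (hP : SuppLE P n) (hQ : SuppLE Q n) :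
    SuppLE (P + Q) n := by
  intro β α hne
  rw [Polynomial.coeff_add, AddMonoidAlgebra.coeff_add, Finsupp.add_apply] at hne
  by_cases h1 : (P.coeff β).coeff α = 0
  · exact hQ β α (by simpa [h1] using hne)
  · exact hP β α h1

lemma SuppLE.neg {P : Polynomial L} {n : ℤ} (hP : SuppLE P n) : SuppLE (-P) n := by
  intro β α hne
  refine hP β α ?_
  rw [Polynomial.coeff_neg, AddMonoidAlgebra.coeff_neg, Finsupp.neg_apply] at hne
  simpa using hne

lemma SuppLE.sub {P Q : Polynomial L} {n : ℤ} (hP : SuppLE P n) (hQ : SuppLE Q n) :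
    SuppLE (P - Q) n := by
  rw [sub_eq_add_neg]; exact hP.add hQ.neg

lemma SuppLE.smul {P : Polynomial L} {n : ℤ} (c : ℂ) (hP : SuppLE P n) : SuppLE (c • P) n := by
  intro β α hne
  refine hP β α ?_
  rw [Polynomial.coeff_smul, AddMonoidAlgebra.coeff_smul, Finsupp.smul_apply] at hne
  intro h0
  simp [h0] at hne

lemma SuppLE.mul {P Q : Polynomial L} {n m : ℤ} (hP : SuppLE P n) (hQ : SuppLE Q m) :
    SuppLE (P * Q) (n + m) := by
  classical
  intro β α hne
  rw [Polynomial.coeff_mul] at hne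
  rw [AddMonoidAlgebra.coeff_sum, Finsupp.finset_sum_apply] at hne
  obtain ⟨⟨i, j⟩, hij, hne'⟩ := Finset.exists_ne_zero_of_sum_ne_zero hne
  have hβ : i + j = β := Finset.HasAntidiagonal.mem_antidiagonal.1 hij
  have hsupp : α ∈ ((P.coeff i).coeff.support + (Q.coeff j).coeff.support) := by
    have := AddMonoidAlgebra.support_coeff_mul_subset (P.coeff i) (Q.coeff j)
    exact this (Finsupp.mem_support_iff.2 hne')
  obtain ⟨α₁, h₁, α₂, h₂, hsum⟩ := Finset.mem_add.1 hsupp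
  have b1 := hP i α₁ (Finsupp.mem_support_iff.1 h₁)
  have b2 := hQ j α₂ (Finsupp.mem_support_iff.1 h₂)
  subst hsum hβ
  push_cast
  omega

lemma suppLE_sum {ι : Type*} {s : Finset ι} {F : ι → Polynomial L} {n : ℤ}
    (h : ∀ i ∈ s, SuppLE (F i) n) : SuppLE (∑ i ∈ s, F i) n := by
  classical
  induction s using Finset.induction_on with
  | empty => simpa using suppLE_zero n
  | insert _ _ hx ih =>
    rw [Finset.sum_insert hx]
    exact (h _ (Finset.mem_insert_self _ _)).add
      (ih fun i hi => h i (Finset.mem_insert_of_mem hi))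

lemma coeff_CT_mul_Xpow (a : ℤ) (b : ℕ) (β : ℕ) :
    (Polynomial.C (T a : L) * Polynomial.X ^ b).coeff β = if β = b then T a else 0 := by
  rw [Polynomial.coeff_C_mul, Polynomial.coeff_X_pow]
  split <;> simp

lemma suppLE_CT_mul_Xpow {a : ℤ} {b : ℕ} {n : ℤ} (h : a - 3 * (b : ℤ) ≤ n) :
    SuppLE (Polynomial.C (T a : L) * Polynomial.X ^ b) n := by
  intro β α hne
  rw [coeff_CT_mul_Xpow] at hne
  split at hne
  · next hh =>
    subst hh
    rw [T_apply] at hne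
    split at hne
    · next h2 => subst h2; exact h
    · simp at hne
  · simp at hne


/-! ### The subalgebra side -/

def Sset : Set (Polynomial Mv) := {p | ∀ d : ℕ, delta1 (p.coeff d) ≤ (d : ℤ)}

lemma mem_Sset_iff {p : Polynomial Mv} :
    p ∈ Sset ↔ ∀ d : ℕ, SuppLE (E (p.coeff d)) d := by
  unfold Sset
  simp only [Set.mem_setOf_eq]
  constructor
  · intro h d
    have := delta1_le_iff.1 (h d)
    rwa [expandY1_eq] at this
  · intro h d
    rw [delta1_le_iff, expandY1_eq]
    exact h d

lemma suppLE_one : SuppLE (1 : Polynomial L) 0 := by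
  have : (1 : Polynomial L) = Polynomial.C (T 0) * Polynomial.X ^ 0 := by simp
  rw [this]
  exact suppLE_CT_mul_Xpow (by norm_num)

lemma zero_mem_Sset : (0 : Polynomial Mv) ∈ Sset := by
  rw [mem_Sset_iff]
  intro d
  simpa using suppLE_zero (d : ℤ)

lemma Sset_add {p q : Polynomial Mv} (hp : p ∈ Sset) (hq : q ∈ Sset) : p + q ∈ Sset := by
  rw [mem_Sset_iff] at hp hq ⊢
  intro d
  rw [Polynomial.coeff_add, map_add]
  exact (hp d).add (hq d)

lemma Sset_mul {p q : Polynomial Mv} (hp : p ∈ Sset) (hq : q ∈ Sset) : p * q ∈ Sset := by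
  rw [mem_Sset_iff] at hp hq ⊢
  intro d
  rw [Polynomial.coeff_mul, map_sum]
  refine suppLE_sum ?_
  rintro ⟨i, j⟩ hij
  have hd : i + j = d := Finset.HasAntidiagonal.mem_antidiagonal.1 hij
  rw [map_mul]
  refine ((hp i).mul (hq j)).mono ?_
  subst hd
  push_cast
  omega

lemma Sset_algebraMap (c : ℂ) : (algebraMap ℂ (Polynomial Mv)) c ∈ Sset := by
  rw [mem_Sset_iff]
  intro d
  have : (algebraMap ℂ (Polynomial Mv)) c = Polynomial.C (algebraMap ℂ Mv c) := rfl
  rw [this, Polynomial.coeff_C]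
  split
  · have hEc : E (algebraMap ℂ Mv c) = Polynomial.C (LaurentPolynomial.C c) := by
      rw [E.commutes c, Polynomial.algebraMap_apply, LaurentPolynomial.algebraMap_apply,
        Algebra.algebraMap_self, RingHom.id_apply]
    rw [hEc]
    intro β α hne
    rw [Polynomial.coeff_C] at hne
    split at hne
    · next hb =>
      subst hb
      rw [LaurentPolynomial.C_apply] at hne
      split at hne
      · next ha => subst ha; simp
      · simp at hne
    · simp at hne
  · simpa using suppLE_zero (d : ℤ)

/-- `Sset` as a subalgebra. -/
def S : Subalgebra ℂ (Polynomial Mv) where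
  carrier := Sset
  mul_mem' := Sset_mul
  add_mem' := Sset_add
  algebraMap_mem' := Sset_algebraMap

/-- The six generators. -/
def g1 : Polynomial Mv := Polynomial.C u
def g2 : Polynomial Mv := Polynomial.C (xx * u)
def g3 : Polynomial Mv := Polynomial.C v
def g4 : Polynomial Mv := Polynomial.C (xx * v)
def g5 : Polynomial Mv := Polynomial.X
def g6 : Polynomial Mv := Polynomial.C xx * Polynomial.X

def Gset : Set (Polynomial Mv) := {g1, g2, g3, g4, g5, g6}

lemma mem_Sset_monomial {f : Mv} {d : ℕ} (h : SuppLE (E f) d) :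
    Polynomial.C f * Polynomial.X ^ d ∈ Sset := by
  rw [mem_Sset_iff]
  intro e
  rw [Polynomial.coeff_C_mul, Polynomial.coeff_X_pow]
  split
  · next he =>
    subst he
    simpa using h
  · simpa using suppLE_zero (e : ℤ)

lemma suppLE_E_u : SuppLE (E u) 0 := by
  have : E u = Polynomial.C (T 0) * Polynomial.X ^ 1 + Polynomial.C (T (-2)) * Polynomial.X ^ 0 := by
    rw [E_u]; simp
  rw [this]
  exact (suppLE_CT_mul_Xpow (by norm_num)).add (suppLE_CT_mul_Xpow (by norm_num))

lemma suppLE_E_xu : SuppLE (E (xx * u)) 0 := by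
  have : E (xx * u) = Polynomial.C (T 1) * Polynomial.X ^ 1 +
      Polynomial.C (T (-1)) * Polynomial.X ^ 0 := by
    rw [map_mul, E_x, E_u]
    rw [show (T (-1) : L) = T 1 * T (-2) by rw [← T_add]; norm_num]
    push_cast [map_mul]
    ring
  rw [this]
  exact (suppLE_CT_mul_Xpow (by norm_num)).add (suppLE_CT_mul_Xpow (by norm_num))

lemma suppLE_E_v : SuppLE (E v) 0 := by
  have : E v = Polynomial.C (T 2) * Polynomial.X ^ 1 := by rw [E_v]; ring
  rw [this]
  exact suppLE_CT_mul_Xpow (by norm_num)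

lemma suppLE_E_xv : SuppLE (E (xx * v)) 0 := by
  have : E (xx * v) = Polynomial.C (T 3) * Polynomial.X ^ 1 := by
    rw [map_mul, E_x, E_v, show (T 3 : L) = T 1 * T 2 by rw [← T_add]; norm_num]
    push_cast [map_mul]
    ring
  rw [this]
  exact suppLE_CT_mul_Xpow (by norm_num)

lemma suppLE_E_x : SuppLE (E xx) 1 := by
  have : E xx = Polynomial.C (T 1) * Polynomial.X ^ 0 := by rw [E_x]; simp
  rw [this]
  exact suppLE_CT_mul_Xpow (by norm_num)

lemma Gset_subset_Sset : Gset ⊆ Sset := by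
  rintro p (rfl | rfl | rfl | rfl | rfl | rfl)
  · simpa [g1] using mem_Sset_monomial (d := 0) (suppLE_E_u.mono (by norm_num))
  · simpa [g2] using mem_Sset_monomial (d := 0) (suppLE_E_xu.mono (by norm_num))
  · simpa [g3] using mem_Sset_monomial (d := 0) (suppLE_E_v.mono (by norm_num))
  · simpa [g4] using mem_Sset_monomial (d := 0) (suppLE_E_xv.mono (by norm_num))
  · have := mem_Sset_monomial (f := (1 : Mv)) (d := 1)
      (by rw [map_one]; exact suppLE_one.mono (by norm_num))
    simpa [g5] using this
  · simpa [g6] using mem_Sset_monomial (d := 1) suppLE_E_x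


/-! ### Factoring `E` through `ℂ[x][y]` -/

def phi : Mv →ₐ[ℂ] Polynomial (Polynomial ℂ) :=
  MvPolynomial.aeval ![Polynomial.C Polynomial.X, Polynomial.X]

def cst : L := T 5 + T (-2)

lemma E_factor (f : Mv) :
    E f = Polynomial.taylor cst ((phi f).map (Polynomial.toLaurent : Polynomial ℂ →+* L)) := by
  have : (E : Mv →+* Polynomial L) =
      (((Polynomial.taylorAlgHom (R := L) cst).toRingHom).comp
        (Polynomial.mapRingHom (Polynomial.toLaurent : Polynomial ℂ →+* L))).comp
        (phi : Mv →+* Polynomial (Polynomial ℂ)) := by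
    apply MvPolynomial.ringHom_ext
    · intro r
      simp [E, phi, Polynomial.taylorAlgHom_apply, Polynomial.taylor_apply]
    · intro i
      fin_cases i
      · show E xx = _
        simp [E_x, phi, Polynomial.taylorAlgHom_apply, Polynomial.taylor_apply]
      · show E yy = _
        simp [E_y, phi, Polynomial.taylorAlgHom_apply, Polynomial.taylor_apply, cst]
  exact RingHom.congr_fun this f

def rho : Polynomial (Polynomial ℂ) →+* Mv :=
  Polynomial.eval₂RingHom (Polynomial.eval₂RingHom (MvPolynomial.C) xx) yy

lemma rho_phi (f : Mv) : rho (phi f) = f := by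
  have : (rho.comp (phi : Mv →+* Polynomial (Polynomial ℂ))) = RingHom.id Mv := by
    apply MvPolynomial.ringHom_ext
    · intro r
      simp [rho, phi]
    · intro i
      fin_cases i
      · show rho (phi xx) = xx
        simp [rho, phi, xx]
      · show rho (phi yy) = yy
        simp [rho, phi, yy]
  exact RingHom.congr_fun this f

lemma phi_injective : Function.Injective phi := by
  intro a b h
  have := congrArg rho h
  rwa [rho_phi, rho_phi] at this

lemma E_injective : Function.Injective E := by
  intro a b h
  rw [E_factor, E_factor] at h
  have h1 := Polynomial.taylor_injective cst h
  have h2 := Polynomial.map_injective _ Polynomial.toLaurent_injective h1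
  exact phi_injective h2

lemma toLaurent_neg_coeff (q : Polynomial ℂ) {n : ℤ} (hn : n < 0) :
    (Polynomial.toLaurent q).coeff n = 0 := by
  rw [LaurentPolynomial.coeff_toLaurent]
  apply Finsupp.mapDomain_notin_range
  rintro ⟨m, rfl⟩
  exact absurd hn (Int.natCast_nonneg m |>.not_gt)

/-- The coefficient of `E g` in its top `y₁`-degree is an honest polynomial in `x`. -/
lemma top_coeff_nonneg (g : Mv) {α : ℤ} (hα : α < 0) :
    ((E g).coeff ((E g).natDegree)).coeff α = 0 := by
  set Q := (phi g).map (Polynomial.toLaurent : Polynomial ℂ →+* L) with hQ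
  have hfac : E g = Polynomial.taylor cst Q := E_factor g
  have hdeg : (E g).natDegree = Q.natDegree := by rw [hfac, Polynomial.natDegree_taylor]
  have hlc : (E g).coeff ((E g).natDegree) = Q.leadingCoeff := by
    rw [hdeg, hfac]
    show (Polynomial.taylor cst Q).coeff Q.natDegree = _
    have : (Polynomial.taylor cst Q).coeff Q.natDegree =
        (Polynomial.taylor cst Q).leadingCoeff := by
      rw [Polynomial.leadingCoeff, Polynomial.natDegree_taylor]
    rw [this, Polynomial.taylor_apply,
      Polynomial.leadingCoeff_comp (by simp [Polynomial.natDegree_X_add_C]),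
      Polynomial.leadingCoeff_X_add_C, one_pow, mul_one]
  rw [hlc, Polynomial.leadingCoeff, Polynomial.coeff_map]
  exact toLaurent_neg_coeff _ hα


/-! ### The negative region -/

def NegReg (P : Polynomial L) : Prop :=
  ∀ (β : ℕ) (α : ℤ), (P.coeff β).coeff α ≠ 0 → α ≤ 2 * (β : ℤ) - 1

lemma E_xu_pow (a B : ℕ) :
    E (xx ^ a * u ^ B) =
      Polynomial.C (T a) * (Polynomial.X + Polynomial.C (T (-2))) ^ B := by
  rw [map_mul, map_pow, map_pow, E_x, E_u, ← Polynomial.C_pow, T_pow, mul_one]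

lemma coeff_E_xu (a B β : ℕ) :
    (E (xx ^ a * u ^ B)).coeff β =
      AddMonoidAlgebra.single ((a : ℤ) - 2 * ((B - β : ℕ) : ℤ)) ((B.choose β : ℂ)) := by
  rw [E_xu_pow, Polynomial.coeff_C_mul, Polynomial.coeff_X_add_C_pow]
  rw [T_pow]
  rw [show ((B.choose β : L)) = LaurentPolynomial.C ((B.choose β : ℂ)) by
    rw [map_natCast]]
  rw [show (T (a:ℤ) : L) * (T ((B - β : ℕ) * (-2:ℤ)) * LaurentPolynomial.C ((B.choose β : ℂ)))
      = LaurentPolynomial.C ((B.choose β : ℂ)) * T ((a:ℤ) - 2*((B - β : ℕ) : ℤ)) by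
    rw [show ((a:ℤ) - 2*((B - β : ℕ) : ℤ)) = (a:ℤ) + ((B - β : ℕ) * (-2:ℤ)) by ring, T_add]
    ring]
  rw [single_eq_C_mul_T]

lemma natDegree_E_xu_le (a B : ℕ) : (E (xx ^ a * u ^ B)).natDegree ≤ B := by
  rw [E_xu_pow]
  refine le_trans (Polynomial.natDegree_mul_le) ?_
  simp only [Polynomial.natDegree_C, zero_add]
  refine le_trans (Polynomial.natDegree_pow_le) ?_
  simp [Polynomial.natDegree_X_add_C]

lemma x2u : xx ^ 2 * u = v + 1 := by unfold u v; ring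

/-- `x^a u^B ∈ ℂ[u, xu, v]` when `a < 2B`. -/
lemma xu_mem {a B : ℕ} (h : a < 2 * B) :
    xx ^ a * u ^ B ∈ Algebra.adjoin ℂ ({u, xx * u, v} : Set Mv) := by
  have hu : u ∈ Algebra.adjoin ℂ ({u, xx * u, v} : Set Mv) :=
    Algebra.subset_adjoin (by simp)
  have hxu : xx * u ∈ Algebra.adjoin ℂ ({u, xx * u, v} : Set Mv) :=
    Algebra.subset_adjoin (by simp)
  have hv1 : v + 1 ∈ Algebra.adjoin ℂ ({u, xx * u, v} : Set Mv) :=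
    add_mem (Algebra.subset_adjoin (by simp)) (one_mem _)
  rcases le_or_gt a B with hab | hab
  · obtain ⟨e, rfl⟩ : ∃ e, B = a + e := ⟨B - a, by omega⟩
    have : xx ^ a * u ^ (a + e) = (xx * u) ^ a * u ^ e := by ring
    rw [this]
    exact mul_mem (pow_mem hxu a) (pow_mem hu e)
  · obtain ⟨c, d, rfl, rfl⟩ : ∃ c d, a = 2 * c + d ∧ B = c + d :=
      ⟨a - B, 2 * B - a, by omega, by omega⟩
    have : xx ^ (2 * c + d) * u ^ (c + d) = (xx ^ 2 * u) ^ c * (xx * u) ^ d := by ring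
    rw [this, x2u]
    exact mul_mem (pow_mem hv1 c) (pow_mem hxu d)

set_option maxHeartbeats 1000000 in
lemma neg_mem_aux :
    ∀ B : ℕ, ∀ g : Mv, NegReg (E g) → (E g).natDegree ≤ B →
      g ∈ Algebra.adjoin ℂ ({u, xx * u, v} : Set Mv) := by
  intro B
  induction B with
  | zero =>
    intro g hneg hdeg
    have hc : (E g).coeff 0 = 0 := by
      ext α
      by_contra hne
      have h0 : (E g).natDegree = 0 := Nat.le_zero.1 hdeg
      have h1 : α ≤ 2 * ((0:ℕ) : ℤ) - 1 := hneg 0 α (by simpa using hne)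
      have h2 : ((E g).coeff ((E g).natDegree)).coeff α = 0 :=
        top_coeff_nonneg g (by push_cast at h1 ⊢; omega)
      rw [h0] at h2
      simp [h2] at hne
    have : E g = 0 := by
      rw [Polynomial.eq_C_of_natDegree_le_zero hdeg, hc, map_zero]
    have hg : g = 0 := E_injective (by rw [this, map_zero])
    rw [hg]; exact zero_mem _
  | succ B IH =>
    -- inner induction on the cardinality of the support of the top coefficient
    suffices H : ∀ n : ℕ, ∀ g : Mv, NegReg (E g) → (E g).natDegree ≤ B + 1 →
        ((E g).coeff (B + 1)).coeff.support.card ≤ n →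
        g ∈ Algebra.adjoin ℂ ({u, xx * u, v} : Set Mv) by
      intro g hneg hdeg
      exact H ((E g).coeff (B+1)).coeff.support.card g hneg hdeg le_rfl
    intro n
    induction n with
    | zero =>
      intro g hneg hdeg hcard
      have hc : (E g).coeff (B + 1) = 0 :=
        AddMonoidAlgebra.coeff_eq_zero.1 (Finsupp.card_support_eq_zero.1 (Nat.le_zero.1 hcard))
      have hdeg' : (E g).natDegree ≤ B := by
        rw [Polynomial.natDegree_le_iff_coeff_eq_zero]
        intro m hm
        rcases eq_or_lt_of_le (Nat.succ_le_of_lt hm) with hm' | hm'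
        · rw [← hm']; exact hc
        · exact Polynomial.coeff_eq_zero_of_natDegree_lt (lt_of_le_of_lt hdeg hm')
      exact IH g hneg hdeg'
    | succ n IHn =>
      intro g hneg hdeg hcard
      rcases Nat.lt_or_ge n ((E g).coeff (B + 1)).coeff.support.card with hlt | hge
      swap
      · exact IHn g hneg hdeg hge
      -- the top coefficient is nonzero; pick a point of its support
      have hne : ((E g).coeff (B + 1)).coeff.support.Nonempty := by
        rw [← Finset.card_pos]; omega
      obtain ⟨α₀, hα₀⟩ := hne
      have hα₀ne : ((E g).coeff (B + 1)).coeff α₀ ≠ 0 := Finsupp.mem_support_iff.1 hα₀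
      have hdeg_eq : (E g).natDegree = B + 1 := by
        refine le_antisymm hdeg (Polynomial.le_natDegree_of_ne_zero ?_)
        intro h0
        rw [h0] at hα₀ne
        simp at hα₀ne
      have hα₀nonneg : 0 ≤ α₀ := by
        by_contra hc
        push_neg at hc
        have := top_coeff_nonneg g hc
        rw [hdeg_eq] at this
        exact hα₀ne this
      have hα₀ub : α₀ ≤ 2 * ((B:ℤ) + 1) - 1 := by
        have := hneg (B+1) α₀ hα₀ne
        push_cast at this ⊢
        omega
      set a : ℕ := α₀.toNat with ha
      have haz : (a : ℤ) = α₀ := Int.toNat_of_nonneg hα₀nonneg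
      have ha2B : a < 2 * (B + 1) := by omega
      set lam : ℂ := ((E g).coeff (B + 1)).coeff α₀ with hlam
      set g' : Mv := g - lam • (xx ^ a * u ^ (B + 1)) with hg'
      have hEg' : E g' = E g - lam • E (xx ^ a * u ^ (B + 1)) := by
        rw [hg', map_sub, map_smul]
      -- the subtracted part's coefficients
      have hcoeffm : ∀ β : ℕ, (E (xx ^ a * u ^ (B+1))).coeff β =
          AddMonoidAlgebra.single ((a : ℤ) - 2 * (((B+1) - β : ℕ) : ℤ)) (((B+1).choose β : ℂ)) :=
        fun β => coeff_E_xu a (B+1) β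
      -- NegReg for g'
      have hneg' : NegReg (E g') := by
        intro β α hne2
        by_contra hgt
        push_neg at hgt
        have hEgz : ((E g).coeff β).coeff α = 0 := by
          by_contra hne3
          exact absurd (hneg β α hne3) (by omega)
        rw [hEg', Polynomial.coeff_sub, AddMonoidAlgebra.coeff_sub, Finsupp.sub_apply, hEgz, zero_sub, neg_ne_zero,
          Polynomial.coeff_smul, AddMonoidAlgebra.coeff_smul, Finsupp.smul_apply, hcoeffm β] at hne2
        rcases le_or_gt β (B+1) with hβ | hβ
        · rw [AddMonoidAlgebra.coeff_single, Finsupp.single_apply] at hne2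
          split at hne2
          · next heq =>
            have hsub : (((B+1) - β : ℕ) : ℤ) = (B+1 : ℤ) - β := by push_cast; omega
            rw [hsub] at heq
            push_cast at hα₀ub hgt
            omega
          · simp at hne2
        · rw [Nat.choose_eq_zero_of_lt hβ] at hne2
          simp at hne2
      -- degree bound for g'
      have hdeg' : (E g').natDegree ≤ B + 1 := by
        rw [hEg']
        refine le_trans (Polynomial.natDegree_sub_le _ _) (max_le hdeg ?_)
        refine le_trans ?_ (natDegree_E_xu_le a (B+1))
        refine Polynomial.natDegree_le_iff_coeff_eq_zero.2 ?_
        intro m hm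
        rw [Polynomial.coeff_smul, Polynomial.coeff_eq_zero_of_natDegree_lt hm, smul_zero]
      -- the support of the top coefficient dropped
      have hmtop : (E (xx ^ a * u ^ (B+1))).coeff (B+1) = AddMonoidAlgebra.single α₀ (1:ℂ) := by
        rw [hcoeffm (B+1), Nat.sub_self, Nat.choose_self, haz]
        norm_num
      have htop' : ((E g').coeff (B + 1)).coeff = ((E g).coeff (B + 1)).coeff.erase α₀ := by
        rw [hEg', Polynomial.coeff_sub, Polynomial.coeff_smul, hmtop, AddMonoidAlgebra.coeff_sub,
          AddMonoidAlgebra.coeff_smul, AddMonoidAlgebra.coeff_single, Finsupp.smul_single, smul_eq_mul, mul_one, Finsupp.erase_eq_sub_single]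
      have hcard' : ((E g').coeff (B + 1)).coeff.support.card ≤ n := by
        rw [htop', Finsupp.support_erase, Finset.card_erase_of_mem hα₀]
        omega
      have hmem' := IHn g' hneg' hdeg' hcard'
      have : g = g' + lam • (xx ^ a * u ^ (B + 1)) := by rw [hg']; ring
      rw [this]
      exact add_mem hmem' (Subalgebra.smul_mem _ (xu_mem ha2B) lam)

lemma neg_mem {g : Mv} (h : NegReg (E g)) :
    g ∈ Algebra.adjoin ℂ ({u, xx * u, v} : Set Mv) :=
  neg_mem_aux (E g).natDegree g h le_rfl


/-! ### The positive region: subtracting monomials `x^s v^b` -/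

/-- Number of monomials of `P` in the region `α ≥ 2 β`. -/
def posCard (P : Polynomial L) : ℕ :=
  ∑ β ∈ P.support, ((P.coeff β).coeff.support.filter fun α => 2 * (β : ℤ) ≤ α).card

lemma posCard_eq_sum {P : Polynomial L} {s : Finset ℕ} (hs : P.support ⊆ s) :
    posCard P = ∑ β ∈ s, ((P.coeff β).coeff.support.filter fun α => 2 * (β : ℤ) ≤ α).card := by
  refine Finset.sum_subset hs ?_
  intro β _ hβ
  rw [Polynomial.notMem_support_iff.1 hβ]
  simp

lemma E_xv_pow (s b : ℕ) :
    E (xx ^ s * v ^ b) = Polynomial.C (T ((s : ℤ) + 2 * b)) * Polynomial.X ^ b := by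
  rw [map_mul, map_pow, map_pow, E_x, E_v, ← Polynomial.C_pow, T_pow, mul_pow,
    ← Polynomial.C_pow, T_pow]
  rw [show ((s : ℤ) + 2 * b) = s * 1 + b * 2 by ring, T_add, map_mul]
  ring

lemma g5_mem : Polynomial.X ∈ Algebra.adjoin ℂ Gset :=
  Algebra.subset_adjoin (by simp [Gset, g5])

/-- The positive-region monomials `x^s v^b t^d` with `s ≤ b + d` are in the adjoin. -/
lemma vxmon_mem {s b d : ℕ} (h : s ≤ b + d) :
    Polynomial.C (xx ^ s * v ^ b) * Polynomial.X ^ d ∈ Algebra.adjoin ℂ Gset := by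
  have hg3 : (g3 : Polynomial Mv) ∈ Algebra.adjoin ℂ Gset :=
    Algebra.subset_adjoin (by simp [Gset])
  have hg4 : (g4 : Polynomial Mv) ∈ Algebra.adjoin ℂ Gset :=
    Algebra.subset_adjoin (by simp [Gset])
  have hg6 : (g6 : Polynomial Mv) ∈ Algebra.adjoin ℂ Gset :=
    Algebra.subset_adjoin (by simp [Gset])
  rcases le_or_gt s b with hsb | hsb
  · obtain ⟨e, rfl⟩ : ∃ e, b = s + e := ⟨b - s, by omega⟩
    have hid : Polynomial.C (xx ^ s * v ^ (s + e)) * Polynomial.X ^ d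
        = g4 ^ s * g3 ^ e * g5 ^ d := by
      simp only [g3, g4, g5, ← Polynomial.C_pow, ← Polynomial.C_mul]
      rw [show (xx * v) ^ s * v ^ e = xx ^ s * v ^ (s + e) by ring]
    rw [hid]
    exact mul_mem (mul_mem (pow_mem hg4 s) (pow_mem hg3 e)) (pow_mem g5_mem d)
  · obtain ⟨c, e, rfl, rfl⟩ : ∃ c e, s = b + c ∧ d = c + e :=
      ⟨s - b, d - (s - b), by omega, by omega⟩
    have hid : Polynomial.C (xx ^ (b + c) * v ^ b) * Polynomial.X ^ (c + e)
        = g4 ^ b * g6 ^ c * g5 ^ e := by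
      simp only [g3, g4, g5, g6, mul_pow, ← Polynomial.C_pow, ← Polynomial.C_mul]
      rw [show xx ^ (b + c) * v ^ b = xx ^ b * v ^ b * xx ^ c by ring, Polynomial.C_mul,
        pow_add]
      ring
    rw [hid]
    exact mul_mem (mul_mem (pow_mem hg4 b) (pow_mem hg6 c)) (pow_mem g5_mem e)

set_option maxHeartbeats 1000000 in
lemma main_aux : ∀ N : ℕ, ∀ (f : Mv) (d : ℕ), posCard (E f) ≤ N → SuppLE (E f) (d : ℤ) →
    Polynomial.C f * Polynomial.X ^ d ∈ Algebra.adjoin ℂ Gset := by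
  classical
  intro N
  induction N with
  | zero =>
    intro f d hcard _
    -- no positive monomials: `f` lies in the negative region
    have hneg : NegReg (E f) := by
      intro β α hne
      by_contra hgt
      push_neg at hgt
      have hβs : β ∈ (E f).support := by
        rw [Polynomial.mem_support_iff]
        intro h0
        rw [h0] at hne
        simp at hne
      have h0 : ((E f).coeff β).coeff.support.filter (fun α => 2 * (β : ℤ) ≤ α) = ∅ := by
        have := Nat.le_zero.1 hcard
        rw [posCard, Finset.sum_eq_zero_iff] at this
        exact Finset.card_eq_zero.1 (this β hβs)
      have : α ∈ ((E f).coeff β).coeff.support.filter (fun α => 2 * (β : ℤ) ≤ α) :=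
        Finset.mem_filter.2 ⟨Finsupp.mem_support_iff.2 hne, by omega⟩
      rw [h0] at this
      simp at this
    have hf : f ∈ Algebra.adjoin ℂ ({u, xx * u, v} : Set Mv) := neg_mem hneg
    have h2 : Polynomial.CAlgHom (R := ℂ) f ∈
        (Algebra.adjoin ℂ ({u, xx * u, v} : Set Mv)).map (Polynomial.CAlgHom (R := ℂ)) :=
      Subalgebra.mem_map.2 ⟨f, hf, rfl⟩
    rw [AlgHom.map_adjoin] at h2
    have h3 : (Polynomial.CAlgHom (R := ℂ)) '' ({u, xx * u, v} : Set Mv) ⊆ Gset := by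
      rw [Set.image_insert_eq, Set.image_insert_eq, Set.image_singleton]
      intro p hp
      rcases hp with rfl | rfl | rfl
      · exact Set.mem_insert _ _
      · simp [Gset, g2, Polynomial.CAlgHom]
      · simp [Gset, g3, Polynomial.CAlgHom]
    have h4 := Algebra.adjoin_mono h3 h2
    have : Polynomial.C f = Polynomial.CAlgHom (R := ℂ) f := rfl
    rw [this]
    exact mul_mem h4 (pow_mem g5_mem d)
  | succ N IH =>
    intro f d hcard hsupp
    rcases le_or_gt (posCard (E f)) N with h | h
    · exact IH f d h hsupp
    obtain ⟨β₀, hβ₀s, hfil⟩ : ∃ β₀ ∈ (E f).support,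
        (((E f).coeff β₀).coeff.support.filter fun α => 2 * (β₀ : ℤ) ≤ α).Nonempty := by
      by_contra hc
      push_neg at hc
      have h0 : posCard (E f) = 0 := by
        rw [posCard]
        refine Finset.sum_eq_zero ?_
        intro β hβ
        rw [Finset.card_eq_zero, ← Finset.not_nonempty_iff_eq_empty]
        exact Finset.not_nonempty_iff_eq_empty.2 (hc β hβ)
      omega
    obtain ⟨α₀, hα₀f⟩ := hfil
    have hα₀mem := (Finset.mem_filter.1 hα₀f).1
    have hα₀ge : 2 * (β₀ : ℤ) ≤ α₀ := (Finset.mem_filter.1 hα₀f).2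
    have hα₀ne : ((E f).coeff β₀).coeff α₀ ≠ 0 := Finsupp.mem_support_iff.1 hα₀mem
    set s : ℕ := (α₀ - 2 * β₀).toNat with hs
    have hsz : (s : ℤ) = α₀ - 2 * β₀ := Int.toNat_of_nonneg (by omega)
    set lam : ℂ := ((E f).coeff β₀).coeff α₀ with hlam
    set m : Mv := xx ^ s * v ^ β₀ with hm
    have hEm : E m = Polynomial.C (T α₀) * Polynomial.X ^ β₀ := by
      rw [hm, E_xv_pow, show (s:ℤ) + 2*β₀ = α₀ by omega]
    set f' : Mv := f - lam • m with hf'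
    have hEf' : E f' = E f - lam • E m := by rw [hf', map_sub, map_smul]
    have hcoe_ne : ∀ β, β ≠ β₀ → (E f').coeff β = (E f).coeff β := by
      intro β hβ
      rw [hEf', Polynomial.coeff_sub, Polynomial.coeff_smul, hEm, coeff_CT_mul_Xpow,
        if_neg hβ, smul_zero, sub_zero]
    have hcoe_eq : ((E f').coeff β₀).coeff = ((E f).coeff β₀).coeff.erase α₀ := by
      ext α
      rw [hEf', Polynomial.coeff_sub, Polynomial.coeff_smul, hEm, coeff_CT_mul_Xpow,
        if_pos rfl, AddMonoidAlgebra.coeff_sub, Finsupp.sub_apply, AddMonoidAlgebra.coeff_smul,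
        Finsupp.smul_apply, T_apply]
      rcases eq_or_ne α α₀ with rfl | hαne
      · rw [Finsupp.erase_same, if_pos rfl, smul_eq_mul, mul_one, ← hlam, sub_self]
      · rw [Finsupp.erase_ne hαne, if_neg (fun hh => hαne hh.symm), smul_zero, sub_zero]
    have hsupp' : SuppLE (E f') d := by
      intro β α hne
      rcases eq_or_ne β β₀ with rfl | hβne
      · rw [hcoe_eq] at hne
        rcases eq_or_ne α α₀ with rfl | hαne
        · rw [Finsupp.erase_same] at hne
          simp at hne
        · rw [Finsupp.erase_ne hαne] at hne
          exact hsupp β α hne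
      · rw [hcoe_ne β hβne] at hne
        exact hsupp β α hne
    have hsub : (E f').support ⊆ (E f).support ∪ {β₀} := by
      intro β hβ
      rcases eq_or_ne β β₀ with rfl | hne
      · exact Finset.mem_union_right _ (Finset.mem_singleton_self β)
      · rw [Polynomial.mem_support_iff, hcoe_ne β hne] at hβ
        exact Finset.mem_union_left _ (Polynomial.mem_support_iff.2 hβ)
    have h1 : posCard (E f') = ∑ β ∈ (E f).support ∪ {β₀},
        (((E f').coeff β).coeff.support.filter fun α => 2 * (β : ℤ) ≤ α).card :=
      posCard_eq_sum hsub
    have h2 : posCard (E f) = ∑ β ∈ (E f).support ∪ {β₀},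
        (((E f).coeff β).coeff.support.filter fun α => 2 * (β : ℤ) ≤ α).card :=
      posCard_eq_sum Finset.subset_union_left
    have hβ₀t : β₀ ∈ (E f).support ∪ {β₀} :=
      Finset.mem_union_right _ (Finset.mem_singleton_self β₀)
    have e1 : ∑ β ∈ ((E f).support ∪ {β₀}).erase β₀,
          (((E f').coeff β).coeff.support.filter fun α => 2 * (β : ℤ) ≤ α).card
        + (((E f').coeff β₀).coeff.support.filter fun α => 2 * (β₀ : ℤ) ≤ α).card
        = ∑ β ∈ (E f).support ∪ {β₀},
          (((E f').coeff β).coeff.support.filter fun α => 2 * (β : ℤ) ≤ α).card :=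
      Finset.sum_erase_add _ _ hβ₀t
    have e2 : ∑ β ∈ ((E f).support ∪ {β₀}).erase β₀,
          (((E f).coeff β).coeff.support.filter fun α => 2 * (β : ℤ) ≤ α).card
        + (((E f).coeff β₀).coeff.support.filter fun α => 2 * (β₀ : ℤ) ≤ α).card
        = ∑ β ∈ (E f).support ∪ {β₀},
          (((E f).coeff β).coeff.support.filter fun α => 2 * (β : ℤ) ≤ α).card :=
      Finset.sum_erase_add _ _ hβ₀t
    have hagree : ∑ β ∈ ((E f).support ∪ {β₀}).erase β₀,
          (((E f').coeff β).coeff.support.filter fun α => 2 * (β : ℤ) ≤ α).card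
        = ∑ β ∈ ((E f).support ∪ {β₀}).erase β₀,
          (((E f).coeff β).coeff.support.filter fun α => 2 * (β : ℤ) ≤ α).card := by
      refine Finset.sum_congr rfl ?_
      intro β hβ
      rw [hcoe_ne β (Finset.ne_of_mem_erase hβ)]
    have htopcard : (((E f').coeff β₀).coeff.support.filter fun α => 2 * (β₀ : ℤ) ≤ α).card
        = (((E f).coeff β₀).coeff.support.filter fun α => 2 * (β₀ : ℤ) ≤ α).card - 1 := by
      rw [hcoe_eq, Finsupp.support_erase, Finset.filter_erase,
        Finset.card_erase_of_mem (by exact Finset.mem_filter.2 ⟨hα₀mem, hα₀ge⟩)]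
    have hposf : 1 ≤ (((E f).coeff β₀).coeff.support.filter fun α => 2 * (β₀ : ℤ) ≤ α).card :=
      Finset.card_pos.2 ⟨α₀, Finset.mem_filter.2 ⟨hα₀mem, hα₀ge⟩⟩
    have hcard' : posCard (E f') ≤ N := by
      rw [h1, ← e1, hagree, htopcard]
      rw [h2, ← e2] at hcard
      omega
    have hstep := IH f' d hcard' hsupp'
    have hsd : s ≤ β₀ + d := by
      have := hsupp β₀ α₀ hα₀ne
      omega
    have hmmem := vxmon_mem (b := β₀) (d := d) hsd
    have hf2 : f = f' + lam • m := by rw [hf']; ring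
    have hCf : Polynomial.C f * Polynomial.X ^ d = Polynomial.C f' * Polynomial.X ^ d
        + lam • (Polynomial.C m * Polynomial.X ^ d) := by
      rw [hf2, map_add, ← Polynomial.smul_C, add_mul, smul_mul_assoc]
    rw [hCf, hm]
    exact add_mem hstep (Subalgebra.smul_mem _ hmmem lam)


lemma Sset_subset_adjoin : Sset ⊆ (Algebra.adjoin ℂ Gset : Subalgebra ℂ (Polynomial Mv)) := by
  intro p hp
  rw [mem_Sset_iff] at hp
  have hrep : p = ∑ e ∈ p.support, Polynomial.C (p.coeff e) * Polynomial.X ^ e := by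
    conv_lhs => rw [Polynomial.as_sum_support p]
    exact Finset.sum_congr rfl fun e _ => (Polynomial.C_mul_X_pow_eq_monomial).symm
  rw [hrep]
  refine Subalgebra.sum_mem _ ?_
  intro e _
  exact main_aux (posCard (E (p.coeff e))) (p.coeff e) e le_rfl (hp e)

lemma adjoin_le_S : Algebra.adjoin ℂ Gset ≤ S :=
  Algebra.adjoin_le Gset_subset_Sset

end
end Delta1FG

/-- The graded algebra `ℂ[x,y]^{δ₁} = ⊕_{d ≥ 0} {f : δ₁(f) ≤ d} t^d` (realized as a subalgebra
of `ℂ[x,y][t]`) is a finitely generated `ℂ`-algebra. -/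
theorem delta1_filtration_fg :
    ∃ B : Subalgebra ℂ (Polynomial (MvPolynomial (Fin 2) ℂ)),
      (B : Set (Polynomial (MvPolynomial (Fin 2) ℂ))) =
        {p | ∀ d : ℕ, delta1 (p.coeff d) ≤ (d : ℤ)} ∧ B.FG := by
  classical
  refine ⟨Algebra.adjoin ℂ Delta1FG.Gset, ?_, ?_⟩
  · ext p
    constructor
    · intro hp
      exact Delta1FG.adjoin_le_S hp
    · intro hp
      exact Delta1FG.Sset_subset_adjoin hp
  · exact ⟨{Delta1FG.g1, Delta1FG.g2, Delta1FG.g3, Delta1FG.g4, Delta1FG.g5, Delta1FG.g6}, by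
      congr 1
      simp [Delta1FG.Gset]⟩
end

section
/- With δ₁, δ₂ the weighted degrees on ℂ[x,y] corresponding to weights (1, −3) in coordinates (x, y₁) and (x, y₂), where y₁ = y − x⁵ − x⁻² and y₂ = y + x⁵ − x⁻², the restrictions of δ₁ and δ₂ to the subring ℂ[x², y] coincide. -/
open Polynomial LaurentPolynomial

/-- Expansion of `f ∈ ℂ[x,y]` in `ℂ[x,x⁻¹][y₂]` where `y₂ = y + x⁵ - x⁻²`
(substitute `y ↦ y₂ - x⁵ + x⁻²`). -/
noncomputable def expandY2 (f : MvPolynomial (Fin 2) ℂ) :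
    Polynomial (LaurentPolynomial ℂ) :=
  MvPolynomial.aeval
    ![Polynomial.C (T 1), Polynomial.X + Polynomial.C (-T 5 + T (-2))] f

/-- `δ₂ f = max {α - 3β : c_{αβ} ≠ 0}` for `f = Σ c_{αβ} x^α y₂^β`. -/
noncomputable def delta2 (f : MvPolynomial (Fin 2) ℂ) : WithBot ℤ :=
  ((expandY2 f).support.biUnion fun β =>
    ((expandY2 f).coeff β).coeff.support.image fun α => α - 3 * (β : ℤ)).max


noncomputable section


/-- The sign character `n ↦ (-1)^n` on `ℤ`. -/
def sgn (n : ℤ) : ℂ := if Even n then 1 else -1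

lemma sgn_ne_zero (n : ℤ) : sgn n ≠ 0 := by
  unfold sgn; split <;> norm_num

lemma sgn_add_one (n : ℤ) : sgn (n + 1) = - sgn n := by
  unfold sgn
  by_cases h : Even n <;> simp [h, Int.even_add_one]

/-- The unit `-T 1` of `ℂ[T;T⁻¹]`. -/
def negT : (LaurentPolynomial ℂ)ˣ where
  val := -T 1
  inv := -T (-1)
  val_inv := by rw [neg_mul_neg, ← T_add]; norm_num
  inv_val := by rw [neg_mul_neg, ← T_add]; norm_num

lemma negT_zpow (n : ℤ) : ((negT ^ n : (LaurentPolynomial ℂ)ˣ) : LaurentPolynomial ℂ)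
    = LaurentPolynomial.C (sgn n) * T n := by
  have hval : ((negT : (LaurentPolynomial ℂ)ˣ) : LaurentPolynomial ℂ) = -T 1 := rfl
  have hinv : ((negT⁻¹ : (LaurentPolynomial ℂ)ˣ) : LaurentPolynomial ℂ) = -T (-1) := rfl
  induction n using Int.induction_on with
  | zero => simp [sgn]
  | succ n ih =>
      rw [zpow_add_one, Units.val_mul, ih, hval, sgn_add_one, T_add, map_neg]
      ring
  | pred n ih =>
      rw [zpow_sub_one, Units.val_mul, ih, hinv]
      have h1 : sgn (-(n:ℤ) - 1) = - sgn (-(n:ℤ)) := by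
        have := sgn_add_one (-(n:ℤ) - 1)
        rw [sub_add_cancel] at this
        rw [this, neg_neg]
      have h2 : (T (-(n:ℤ) - 1) : LaurentPolynomial ℂ) = T (-(n:ℤ)) * T (-1 : ℤ) := by
        rw [show -(n:ℤ) - 1 = -(n:ℤ) + -1 by ring, T_add]
      rw [h1, h2, map_neg]
      ring

/-- The sign-twisting algebra endomorphism `T n ↦ (-1)^n T n` (i.e. `x ↦ -x`). -/
def sigma : LaurentPolynomial ℂ →ₐ[ℂ] LaurentPolynomial ℂ :=
  AddMonoidAlgebra.lift ℂ (LaurentPolynomial ℂ) ℤ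
    ((Units.coeHom (LaurentPolynomial ℂ)).comp (zpowersHom (LaurentPolynomial ℂ)ˣ negT))

lemma sigma_single (n : ℤ) (a : ℂ) :
    sigma (AddMonoidAlgebra.single n a) = AddMonoidAlgebra.single n (sgn n * a) := by
  rw [sigma, AddMonoidAlgebra.lift_single]
  simp only [MonoidHom.comp_apply, Units.coeHom_apply, zpowersHom_apply, toAdd_ofAdd,
    negT_zpow, single_eq_C_mul_T]
  rw [Algebra.smul_def, ← LaurentPolynomial.C_eq_algebraMap, ← mul_assoc, ← map_mul, mul_comm a]

lemma lp_add_apply (f g : LaurentPolynomial ℂ) (m : ℤ) : (f + g).coeff m = f.coeff m + g.coeff m :=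
  Finsupp.add_apply f.coeff g.coeff m

lemma lp_single_apply (n : ℤ) (a : ℂ) (m : ℤ) :
    (AddMonoidAlgebra.single n a : LaurentPolynomial ℂ).coeff m = if n = m then a else 0 :=
  Finsupp.single_apply

lemma sigma_apply' (q : LaurentPolynomial ℂ) (m : ℤ) : (sigma q).coeff m = sgn m * q.coeff m := by
  induction q using AddMonoidAlgebra.induction_linear with
  | zero => simp
  | add f g hf hg => rw [map_add, lp_add_apply, lp_add_apply, hf, hg]; ring
  | single n a =>
      rw [sigma_single, lp_single_apply, lp_single_apply]
      rcases eq_or_ne n m with rfl | h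
      · simp
      · simp [h]

lemma sigma_support (q : LaurentPolynomial ℂ) : (sigma q).coeff.support = q.coeff.support := by
  ext m
  simp [Finsupp.mem_support_iff, sigma_apply', sgn_ne_zero, mul_eq_zero]

lemma sigma_eq_zero {q : LaurentPolynomial ℂ} : sigma q = 0 ↔ q = 0 := by
  rw [← AddMonoidAlgebra.coeff_eq_zero, ← AddMonoidAlgebra.coeff_eq_zero, ← Finsupp.support_eq_empty,
    ← Finsupp.support_eq_empty, sigma_support]

lemma sigma_T (n : ℤ) : sigma (T n) = LaurentPolynomial.C (sgn n) * T n := by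
  rw [show (T n : LaurentPolynomial ℂ) = AddMonoidAlgebra.single n 1 from rfl, sigma_single, mul_one,
    single_eq_C_mul_T]
  rfl

lemma sigma_T_one : sigma (T 1) = -T 1 := by
  rw [sigma_T, show sgn 1 = -1 by norm_num [sgn, Int.even_iff], map_neg, map_one]; ring

lemma sigma_T_five : sigma (T 5) = -T 5 := by
  rw [sigma_T, show sgn 5 = -1 by norm_num [sgn, Int.even_iff], map_neg, map_one]; ring

lemma sigma_T_negtwo : sigma (T (-2)) = T (-2) := by
  rw [sigma_T, show sgn (-2) = 1 by norm_num [sgn, Int.even_iff], map_one, one_mul]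


lemma mapAlgHom_C (q : LaurentPolynomial ℂ) :
    (Polynomial.mapAlgHom sigma) (Polynomial.C q) = Polynomial.C (sigma q) := by
  show (Polynomial.map sigma.toRingHom (Polynomial.C q)) = _
  rw [Polynomial.map_C]
  rfl

lemma mapAlgHom_X :
    (Polynomial.mapAlgHom sigma) (Polynomial.X : Polynomial (LaurentPolynomial ℂ))
      = Polynomial.X := by
  show (Polynomial.map sigma.toRingHom Polynomial.X) = _
  rw [Polynomial.map_X]

lemma key_map (f : MvPolynomial (Fin 2) ℂ) :
    expandY2 (MvPolynomial.aeval ![(MvPolynomial.X 0 : MvPolynomial (Fin 2) ℂ) ^ 2,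
        MvPolynomial.X 1] f)
    = Polynomial.mapAlgHom sigma (expandY1 (MvPolynomial.aeval
        ![(MvPolynomial.X 0 : MvPolynomial (Fin 2) ℂ) ^ 2, MvPolynomial.X 1] f)) := by
  have h : ((Polynomial.mapAlgHom sigma).comp
        ((MvPolynomial.aeval
            ![(Polynomial.C (T 1) : Polynomial (LaurentPolynomial ℂ)),
              Polynomial.X + Polynomial.C (T 5 + T (-2))]).comp
          (MvPolynomial.aeval ![(MvPolynomial.X 0 : MvPolynomial (Fin 2) ℂ) ^ 2,
            MvPolynomial.X 1])))
      = ((MvPolynomial.aeval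
            ![(Polynomial.C (T 1) : Polynomial (LaurentPolynomial ℂ)),
              Polynomial.X + Polynomial.C (-T 5 + T (-2))]).comp
          (MvPolynomial.aeval ![(MvPolynomial.X 0 : MvPolynomial (Fin 2) ℂ) ^ 2,
            MvPolynomial.X 1])) := by
    apply MvPolynomial.algHom_ext
    intro i
    fin_cases i
    · simp [mapAlgHom_C, sigma_T_one]; ring
    · simp [mapAlgHom_C, mapAlgHom_X, sigma_T_five, sigma_T_negtwo]
  have h2 := DFunLike.congr_fun h f
  simp only [AlgHom.comp_apply] at h2
  rw [expandY1, expandY2, ← h2]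

lemma coeff_mapAlgHom (p : Polynomial (LaurentPolynomial ℂ)) (β : ℕ) :
    ((Polynomial.mapAlgHom sigma) p).coeff β = sigma (p.coeff β) := by
  show (Polynomial.map sigma.toRingHom p).coeff β = _
  rw [Polynomial.coeff_map]
  rfl

end

/-- The restrictions of `δ₁` and `δ₂` to the subring `ℂ[x²,y]` (the image of `ℂ[u,v]`
under `u ↦ x²`, `v ↦ y`) coincide. -/
theorem delta1_eq_delta2_on_even :
    ∀ f : MvPolynomial (Fin 2) ℂ,
      delta1 (MvPolynomial.aeval ![(MvPolynomial.X 0 : MvPolynomial (Fin 2) ℂ) ^ 2,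
        MvPolynomial.X 1] f) =
      delta2 (MvPolynomial.aeval ![(MvPolynomial.X 0 : MvPolynomial (Fin 2) ℂ) ^ 2,
        MvPolynomial.X 1] f) := by
  intro f
  unfold delta1 delta2
  rw [key_map f]
  congr 1
  apply Finset.biUnion_congr
  · ext β
    simp only [Polynomial.mem_support_iff, coeff_mapAlgHom, ne_eq, sigma_eq_zero]
  · intro β _
    rw [coeff_mapAlgHom, sigma_support]
end
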